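/- Let d be a dense database of range size N. Then the elementary volumes v(1,1), v(1,2), …, v(1,N) are N pairwise distinct vertices of the exact-volume graph G that are pairwise adjacent; that is, they form a clique of size N in G. (For 1 ≤ i < j ≤ N the witnessing third volume is v(i+1,j) ∈ V, since v(1,j) = v(1,i) + v(i+1,j).) -/

import Mathlib

/-- The volume of the range `[a,b]` of a database `d`. -/
def dbVol (d : ℕ → ℕ) (a b : ℕ) : ℕ := ∑ k ∈ Finset.Icc a b, d k

/-- The set of all range-query volumes of a database of range size `N`. -/
def volSet (d : ℕ → ℕ) (N : ℕ) : Set ℕ :=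
  {x | ∃ a b, 1 ≤ a ∧ a ≤ b ∧ b ≤ N ∧ x = dbVol d a b}

/-- The exact-volume graph on a set `V` of volumes: distinct `u, w ∈ V` are
adjacent iff there is `z ∈ V` with `u = w + z` or `w = u + z`. -/
def exactGraph (V : Set ℕ) : SimpleGraph ℕ where
  Adj u w := u ≠ w ∧ u ∈ V ∧ w ∈ V ∧ ∃ z ∈ V, u = w + z ∨ w = u + z
  symm := by
    constructor
    rintro u w ⟨h1, h2, h3, z, hz, h4⟩
    exact ⟨h1.symm, h3, h2, z, hz, h4.symm⟩
  loopless := by constructor; rintro u ⟨h, _⟩; exact h rfl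

lemma dbVol_split (d : ℕ → ℕ) {i j : ℕ} (h : i ≤ j) :
    dbVol d 1 j = dbVol d 1 i + dbVol d (i + 1) j := by
  unfold dbVol
  rw [(by rw [← Finset.Icc_add_one_left_eq_Ioc]; rfl : Finset.Icc 1 j = Finset.Ioc 0 j),
    (by rw [← Finset.Icc_add_one_left_eq_Ioc]; rfl : Finset.Icc 1 i = Finset.Ioc 0 i), Finset.Icc_add_one_left_eq_Ioc i j]
  exact (Finset.sum_Ioc_consecutive _ (Nat.zero_le i) h).symm

lemma dbVol_pos (d : ℕ → ℕ) {N a b : ℕ} (hdense : ∀ k, 1 ≤ k → k ≤ N → 1 ≤ d k)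
    (ha : 1 ≤ a) (hab : a ≤ b) (hb : b ≤ N) : 1 ≤ dbVol d a b := by
  calc 1 ≤ d b := hdense b (ha.trans hab) hb
    _ ≤ dbVol d a b := Finset.single_le_sum (f := d) (fun k _ => Nat.zero_le _)
        (Finset.mem_Icc.mpr ⟨hab, le_rfl⟩)

/-- For a dense database, the `N` elementary volumes `v(1,1), …, v(1,N)` are
vertices of the exact-volume graph forming a clique of size `N`. -/
theorem stmt_1 (N : ℕ) (hN : 1 ≤ N) (d : ℕ → ℕ)
    (hdense : ∀ k, 1 ≤ k → k ≤ N → 1 ≤ d k) :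
    (∀ i, 1 ≤ i → i ≤ N → dbVol d 1 i ∈ volSet d N) ∧
    (exactGraph (volSet d N)).IsNClique N
      ((Finset.Icc 1 N).image (fun i => dbVol d 1 i)) := by
  have hmem : ∀ i, 1 ≤ i → i ≤ N → dbVol d 1 i ∈ volSet d N := fun i h1 h2 =>
    ⟨1, i, le_rfl, h1, h2, rfl⟩
  -- strict monotonicity on [1,N]
  have hlt : ∀ i j, 1 ≤ i → i < j → j ≤ N → dbVol d 1 i < dbVol d 1 j := by
    intro i j h1 hij hjN
    rw [dbVol_split d hij.le]
    have := dbVol_pos d hdense (by omega : 1 ≤ i + 1) hij hjN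
    omega
  have hinj : Set.InjOn (fun i => dbVol d 1 i) (Finset.Icc 1 N) := by
    intro a ha b hb hab
    simp only [Finset.coe_Icc, Set.mem_Icc] at ha hb
    by_contra hne
    rcases Nat.lt_or_ge a b with h | h
    · exact absurd hab (hlt a b ha.1 h hb.2).ne
    · exact absurd hab.symm (hlt b a hb.1 (lt_of_le_of_ne h (Ne.symm hne)) ha.2).ne
  refine ⟨hmem, ?_, ?_⟩
  · intro u hu w hw huw
    simp only [Finset.coe_image, Set.mem_image, Finset.coe_Icc, Set.mem_Icc] at hu hw
    obtain ⟨i, ⟨hi1, hiN⟩, rfl⟩ := hu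
    obtain ⟨j, ⟨hj1, hjN⟩, rfl⟩ := hw
    have hij : i ≠ j := fun h => huw (by rw [h])
    rcases Nat.lt_or_ge i j with h | h
    · exact ⟨huw, hmem i hi1 hiN, hmem j hj1 hjN,
        dbVol d (i + 1) j, ⟨i + 1, j, le_add_self, h, hjN, rfl⟩,
        Or.inr (dbVol_split d h.le)⟩
    · have h' : j < i := lt_of_le_of_ne h (Ne.symm hij)
      exact ⟨huw, hmem i hi1 hiN, hmem j hj1 hjN,
        dbVol d (j + 1) i, ⟨j + 1, i, le_add_self, h', hiN, rfl⟩,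
        Or.inl (dbVol_split d h'.le)⟩
  · rw [Finset.card_image_of_injOn hinj, Nat.card_Icc]; omega
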